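/- Let l : (m,∞) → (0,∞) be twice continuously differentiable and slowly varying with x·l'(x) = ε₁(x)·l(x) where ε₁(x) → 0 and x·l'(x) ≥ l₁ for some constant l₁ > 1, and l''(x) ∼ −l'(x)/x as x → ∞. Then ρ = exp ∘ l is strictly convex on (l₂, ∞) for some l₂ > m. -/

import Mathlib

theorem stmt15 (m l₁ : ℝ) (hm : 0 < m) (hl₁ : 1 < l₁)
    (l ε₁ : ℝ → ℝ)
    (hl : ContDiffOn ℝ 2 l (Set.Ioi m))
    (hlpos : ∀ x ∈ Set.Ioi m, 0 < l x)
    (hslow : ∀ x ∈ Set.Ioi m, x * deriv l x = ε₁ x * l x)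
    (hε : Filter.Tendsto ε₁ Filter.atTop (nhds 0))
    (hlow : ∀ x ∈ Set.Ioi m, l₁ ≤ x * deriv l x)
    (hsecond : Filter.Tendsto (fun x => deriv (deriv l) x / (-(deriv l x) / x))
      Filter.atTop (nhds 1)) :
    ∃ l₂ > m, StrictConvexOn ℝ (Set.Ioi l₂) (fun x => Real.exp (l x)) := by
  set c : ℝ := (1 + l₁) / 2 with hc
  have hc1 : (1 : ℝ) < c := by rw [hc]; linarith
  have hcl : c < l₁ := by rw [hc]; linarith
  have hev : ∀ᶠ x in Filter.atTop,
      deriv (deriv l) x / (-(deriv l x) / x) < c := by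
    exact hsecond.eventually_lt_const hc1
  obtain ⟨A, hA⟩ := Filter.eventually_atTop.mp hev
  refine ⟨max m A + 1, by simp [lt_add_of_le_of_pos, le_max_left, zero_lt_one]
    , ?_⟩
  have hsub : Set.Ioi (max m A + 1) ⊆ Set.Ioi m := by
    intro x hx
    simp only [Set.mem_Ioi] at *
    have := le_max_left m A
    linarith
  -- differentiability facts
  have hld : DifferentiableOn ℝ l (Set.Ioi m) :=
    hl.differentiableOn (by norm_num)
  have hld' : ContDiffOn ℝ 1 (deriv l) (Set.Ioi m) := by
    have := ContDiffOn.deriv_of_isOpen (m := 1) hl isOpen_Ioi (by norm_num)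
    simpa using this
  have hldd : DifferentiableOn ℝ (deriv l) (Set.Ioi m) :=
    hld'.differentiableOn (by norm_num)
  have hderivAt : ∀ x ∈ Set.Ioi m, HasDerivAt l (deriv l x) x := by
    intro x hx
    exact ((hld.differentiableAt (isOpen_Ioi.mem_nhds hx))).hasDerivAt
  have hderivAt2 : ∀ x ∈ Set.Ioi m, HasDerivAt (deriv l) (deriv (deriv l) x) x := by
    intro x hx
    exact ((hldd.differentiableAt (isOpen_Ioi.mem_nhds hx))).hasDerivAt
  -- first derivative of exp ∘ l on Ioi m
  have hfd : ∀ x ∈ Set.Ioi m,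
      HasDerivAt (fun y => Real.exp (l y)) (Real.exp (l x) * deriv l x) x := by
    intro x hx
    exact (hderivAt x hx).exp
  have hderiv_eq : ∀ x ∈ Set.Ioi m,
      deriv (fun y => Real.exp (l y)) x = Real.exp (l x) * deriv l x := by
    intro x hx
    exact (hfd x hx).deriv
  apply strictConvexOn_of_deriv2_pos (convex_Ioi _)
  · exact (Real.continuous_exp.comp_continuousOn
      ((hl.continuousOn).mono hsub))
  · intro x hx
    rw [interior_Ioi] at hx
    have hxm : x ∈ Set.Ioi m := hsub hx
    have hxm' : m < x := hxm
    have hx0 : 0 < x := lt_trans hm hxm'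
    have hxA : A ≤ x := by
      simp only [Set.mem_Ioi] at hx
      have := le_max_right m A
      linarith
    -- compute second derivative
    have hg : HasDerivAt (fun y => Real.exp (l y) * deriv l y)
        (Real.exp (l x) * deriv l x * deriv l x
          + Real.exp (l x) * deriv (deriv l) x) x := by
      exact ((hderivAt x hxm).exp).mul (hderivAt2 x hxm)
    have heq : deriv (fun y => Real.exp (l y))
        =ᶠ[nhds x] fun y => Real.exp (l y) * deriv l y := by
      filter_upwards [isOpen_Ioi.mem_nhds hxm] with y hy
      exact hderiv_eq y hy
    have h2 : deriv (deriv (fun y => Real.exp (l y))) x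
        = Real.exp (l x) * deriv l x * deriv l x
          + Real.exp (l x) * deriv (deriv l) x := by
      rw [heq.deriv_eq]
      exact hg.deriv
    have : deriv^[2] (fun y => Real.exp (l y)) x
        = deriv (deriv (fun y => Real.exp (l y))) x := by
      simp [Function.iterate_succ, Function.iterate_zero]
    rw [this, h2]
    -- positivity
    have hlow' : l₁ ≤ x * deriv l x := hlow x hxm
    have hd1 : 0 < deriv l x := by
      have : 0 < x * deriv l x := lt_of_lt_of_le (by linarith) hlow'
      nlinarith
    have hratio : deriv (deriv l) x / (-(deriv l x) / x) < c := hA x hxA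
    have hneg : -(deriv l x) / x < 0 := by
      apply div_neg_of_neg_of_pos <;> linarith
    have hdd : c * (-(deriv l x) / x) < deriv (deriv l) x :=
      (div_lt_iff_of_neg hneg).mp hratio
    have hexp : 0 < Real.exp (l x) := Real.exp_pos _
    have key : 0 < deriv l x * deriv l x + deriv (deriv l) x := by
      have h1 : deriv l x * deriv l x ≥ l₁ * deriv l x / x := by
        rw [ge_iff_le, div_le_iff₀ hx0]
        nlinarith
      have h2 : c * (-(deriv l x) / x) = -(c * deriv l x / x) := by ring
      have h3 : c * deriv l x / x < l₁ * deriv l x / x := by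
        gcongr
      nlinarith [div_pos hd1 hx0]
    nlinarith
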